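/- arXiv:1210.3882 — 3 statements merged into one kernel-verified Lean document; each statement's English description precedes it below -/
import Mathlib

section
/- Set u = (1,0) ∈ ℝ² and for 0 < μ < 1 define f_μ(q) = 1/|q| − μ/|q − (1−μ)u| − (1−μ)/|q + μu| for q ∈ ℝ² away from the two singularities. There exists an absolute constant C > 0 such that for every μ ∈ (0,1) and every q ∈ ℝ² with |q| ≥ 2, the gradient of f_μ satisfies |∇f_μ(q)| ≤ C μ / |q|⁴. -/
open InnerProductSpace

local notation "E" => EuclideanSpace ℝ (Fin 2)
local notation "⟪" x ", " y "⟫" => @inner ℝ _ _ x y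


noncomputable def Fv (x : E) : E := (‖x‖ ^ 3)⁻¹ • x

noncomputable def Lv (x : E) : EuclideanSpace ℝ (Fin 2) →L[ℝ] EuclideanSpace ℝ (Fin 2) :=
  (‖x‖ ^ 3)⁻¹ • ContinuousLinearMap.id ℝ (EuclideanSpace ℝ (Fin 2))
    + ((-3 * (‖x‖ ^ 5)⁻¹) • innerSL ℝ x).smulRight x

lemma Lv_apply (x h : E) :
    Lv x h = (‖x‖ ^ 3)⁻¹ • h + (-3 * (‖x‖ ^ 5)⁻¹ * ⟪x, h⟫) • x := by
  simp [Lv, smul_smul]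

lemma inv_cube_diff {m r s : ℝ} (hm : 0 < m) (hr : m ≤ r) (hs : m ≤ s)
    (hr' : r ≤ 3 * m) (hs' : s ≤ 3 * m) :
    |(r ^ 3)⁻¹ - (s ^ 3)⁻¹| ≤ 27 / m ^ 4 * |r - s| := by
  have hr0 : (0:ℝ) < r := hm.trans_le hr
  have hs0 : (0:ℝ) < s := hm.trans_le hs
  have e : (r ^ 3)⁻¹ - (s ^ 3)⁻¹ = (s ^ 3 - r ^ 3) / (r ^ 3 * s ^ 3) := by
    field_simp
  rw [e, abs_div, abs_of_pos (show (0:ℝ) < r ^ 3 * s ^ 3 by positivity),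
    div_le_iff₀ (by positivity)]
  have h1 : |s ^ 3 - r ^ 3| ≤ 27 * m ^ 2 * |r - s| := by
    have e2 : s ^ 3 - r ^ 3 = (s - r) * (s ^ 2 + s * r + r ^ 2) := by ring
    have e3 : |s - r| = |r - s| := abs_sub_comm s r
    rw [e2, abs_mul, e3, mul_comm]
    have h2 : |s ^ 2 + s * r + r ^ 2| ≤ 27 * m ^ 2 := by
      rw [abs_of_pos (by positivity)]; nlinarith
    exact mul_le_mul_of_nonneg_right h2 (abs_nonneg _)
  have h3 : m ^ 6 ≤ r ^ 3 * s ^ 3 := by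
    nlinarith [pow_le_pow_left₀ hm.le hr 3, pow_le_pow_left₀ hm.le hs 3, pow_pos hm 3]
  calc |s ^ 3 - r ^ 3| ≤ 27 * m ^ 2 * |r - s| := h1
    _ = 27 / m ^ 4 * |r - s| * m ^ 6 := by field_simp
    _ ≤ 27 / m ^ 4 * |r - s| * (r ^ 3 * s ^ 3) := by
        apply mul_le_mul_of_nonneg_left h3 (by positivity)

lemma inv_fifth_diff {m r s : ℝ} (hm : 0 < m) (hr : m ≤ r) (hs : m ≤ s)
    (hr' : r ≤ 3 * m) (hs' : s ≤ 3 * m) :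
    |(r ^ 5)⁻¹ - (s ^ 5)⁻¹| ≤ 405 / m ^ 6 * |r - s| := by
  have hr0 : (0:ℝ) < r := hm.trans_le hr
  have hs0 : (0:ℝ) < s := hm.trans_le hs
  have e : (r ^ 5)⁻¹ - (s ^ 5)⁻¹ = (s ^ 5 - r ^ 5) / (r ^ 5 * s ^ 5) := by
    field_simp
  rw [e, abs_div, abs_of_pos (show (0:ℝ) < r ^ 5 * s ^ 5 by positivity),
    div_le_iff₀ (by positivity)]
  have h1 : |s ^ 5 - r ^ 5| ≤ 405 * m ^ 4 * |r - s| := by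
    have e2 : s ^ 5 - r ^ 5 = (s - r) * (s^4 + s^3*r + s^2*r^2 + s*r^3 + r^4) := by ring
    have e3 : |s - r| = |r - s| := abs_sub_comm s r
    rw [e2, abs_mul, e3, mul_comm]
    have h2 : |s^4 + s^3*r + s^2*r^2 + s*r^3 + r^4| ≤ 405 * m ^ 4 := by
      rw [abs_of_pos (by positivity)]
      nlinarith [pow_le_pow_left₀ hs0.le hs' 4, pow_le_pow_left₀ hr0.le hr' 4,
        pow_le_pow_left₀ hs0.le hs' 3, pow_le_pow_left₀ hr0.le hr' 3,
        pow_le_pow_left₀ hs0.le hs' 2, pow_le_pow_left₀ hr0.le hr' 2,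
        mul_pos hr0 hs0, sq_nonneg (r - s), sq_nonneg (r + s), sq_nonneg m]
    exact mul_le_mul_of_nonneg_right h2 (abs_nonneg _)
  have h3 : m ^ 10 ≤ r ^ 5 * s ^ 5 := by
    nlinarith [pow_le_pow_left₀ hm.le hr 5, pow_le_pow_left₀ hm.le hs 5, pow_pos hm 5]
  calc |s ^ 5 - r ^ 5| ≤ 405 * m ^ 4 * |r - s| := h1
    _ = 405 / m ^ 6 * |r - s| * m ^ 10 := by field_simp
    _ ≤ 405 / m ^ 6 * |r - s| * (r ^ 5 * s ^ 5) := by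
        apply mul_le_mul_of_nonneg_left h3 (by positivity)


lemma rpow_sq_neg_half (a : ℝ) (ha : 0 ≤ a) : (a ^ 2 : ℝ) ^ (-(1/2) : ℝ) = a⁻¹ := by
  rcases eq_or_lt_of_le ha with h | h
  · simp [← h]
  · rw [← Real.rpow_natCast a 2, ← Real.rpow_mul h.le]
    norm_num
    rw [Real.rpow_neg_one]

lemma rpow_sq_neg_3half (a : ℝ) (ha : 0 ≤ a) : (a ^ 2 : ℝ) ^ (-(3/2) : ℝ) = (a ^ 3)⁻¹ := by
  rcases eq_or_lt_of_le ha with h | h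
  · simp [← h]
  · rw [← Real.rpow_natCast a 2, ← Real.rpow_mul h.le]
    rw [show ((2:ℕ):ℝ) * -(3/2) = -(3:ℝ) by norm_num, Real.rpow_neg h.le,
      show (3:ℝ) = ((3:ℕ):ℝ) by norm_num, Real.rpow_natCast]

lemma rpow_sq_neg_5half (a : ℝ) (ha : 0 < a) : (a ^ 2 : ℝ) ^ (-(5/2) : ℝ) = (a ^ 5)⁻¹ := by
  rw [← Real.rpow_natCast a 2, ← Real.rpow_mul ha.le]
  rw [show ((2:ℕ):ℝ) * -(5/2) = -(5:ℝ) by norm_num, Real.rpow_neg ha.le,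
    show (5:ℝ) = ((5:ℕ):ℝ) by norm_num, Real.rpow_natCast]

lemma hasFDerivAt_inv_norm {x : E} (hx : x ≠ 0) :
    HasFDerivAt (fun p : E => ‖p‖⁻¹) (-((‖x‖^3)⁻¹ • innerSL ℝ x)) x := by
  have hx0 : (0:ℝ) < ‖x‖ := norm_pos_iff.mpr hx
  have h1 : HasFDerivAt (fun p : E => ‖p‖ ^ 2) (2 • innerSL ℝ x) x :=
    (hasStrictFDerivAt_norm_sq x).hasFDerivAt
  have h2 : HasDerivAt (fun t : ℝ => t ^ (-(1/2) : ℝ))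
      (-(1/2) * (‖x‖^2) ^ ((-(1/2) : ℝ) - 1)) (‖x‖^2) :=
    Real.hasDerivAt_rpow_const (Or.inl (by positivity))
  have h3 := h2.comp_hasFDerivAt x h1
  have hfun : (fun p : E => ‖p‖⁻¹)
      = ((fun t : ℝ => t ^ (-(1/2) : ℝ)) ∘ fun p : E => ‖p‖ ^ 2) :=
    funext fun p => (rpow_sq_neg_half ‖p‖ (norm_nonneg p)).symm
  rw [hfun]
  refine h3.congr_fderiv ?_
  rw [show ((-(1/2):ℝ) - 1) = (-(3/2):ℝ) by norm_num, rpow_sq_neg_3half _ (norm_nonneg x)]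
  ext h
  simp [ContinuousLinearMap.smul_apply]
  ring

lemma hasFDerivAt_inv_cube_norm {x : E} (hx : x ≠ 0) :
    HasFDerivAt (fun p : E => (‖p‖^3)⁻¹) ((-3 * (‖x‖^5)⁻¹) • innerSL ℝ x) x := by
  have hx0 : (0:ℝ) < ‖x‖ := norm_pos_iff.mpr hx
  have h1 : HasFDerivAt (fun p : E => ‖p‖ ^ 2) (2 • innerSL ℝ x) x :=
    (hasStrictFDerivAt_norm_sq x).hasFDerivAt
  have h2 : HasDerivAt (fun t : ℝ => t ^ (-(3/2) : ℝ))
      (-(3/2) * (‖x‖^2) ^ ((-(3/2) : ℝ) - 1)) (‖x‖^2) :=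
    Real.hasDerivAt_rpow_const (Or.inl (by positivity))
  have h3 := h2.comp_hasFDerivAt x h1
  have hfun : (fun p : E => (‖p‖^3)⁻¹)
      = ((fun t : ℝ => t ^ (-(3/2) : ℝ)) ∘ fun p : E => ‖p‖ ^ 2) :=
    funext fun p => (rpow_sq_neg_3half ‖p‖ (norm_nonneg p)).symm
  rw [hfun]
  refine h3.congr_fderiv ?_
  rw [show ((-(3/2):ℝ) - 1) = (-(5/2):ℝ) by norm_num, rpow_sq_neg_5half _ hx0]
  ext h
  simp [ContinuousLinearMap.smul_apply]
  ring

lemma Lv_lip {m : ℝ} (hm : 0 < m) {x y : E} (hx : m ≤ ‖x‖) (hy : m ≤ ‖y‖)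
    (hx' : ‖x‖ ≤ 3 * m) (hy' : ‖y‖ ≤ 3 * m) :
    ‖Lv x - Lv y‖ ≤ 10980 / m ^ 4 * ‖x - y‖ := by
  apply ContinuousLinearMap.opNorm_le_bound _ (by positivity)
  intro h
  rw [ContinuousLinearMap.sub_apply, Lv_apply, Lv_apply]
  have hds : |‖x‖ - ‖y‖| ≤ ‖x - y‖ := abs_norm_sub_norm_le x y
  have key : ((‖x‖^3)⁻¹ • h + (-3*(‖x‖^5)⁻¹*⟪x,h⟫) • x)
        - ((‖y‖^3)⁻¹ • h + (-3*(‖y‖^5)⁻¹*⟪y,h⟫) • y)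
      = ((‖x‖^3)⁻¹ - (‖y‖^3)⁻¹) • h
        + ((-3*((‖x‖^5)⁻¹ - (‖y‖^5)⁻¹) * ⟪x,h⟫) • x
        + ((-3*(‖y‖^5)⁻¹ * (⟪x,h⟫ - ⟪y,h⟫)) • x
        + (-3*(‖y‖^5)⁻¹ * ⟪y,h⟫) • (x - y))) := by module
  rw [key]
  have hipx : |⟪x,h⟫| ≤ ‖x‖ * ‖h‖ := abs_real_inner_le_norm x h
  have hipy : |⟪y,h⟫| ≤ ‖y‖ * ‖h‖ := abs_real_inner_le_norm y h
  have hipd : |⟪x,h⟫ - ⟪y,h⟫| ≤ ‖x - y‖ * ‖h‖ := by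
    rw [← inner_sub_left]
    exact abs_real_inner_le_norm (x - y) h
  have hinv5 : (‖y‖^5)⁻¹ ≤ (m^5)⁻¹ := by
    apply inv_anti₀ (by positivity)
    exact pow_le_pow_left₀ hm.le hy 5
  have n1 : ‖((‖x‖^3)⁻¹ - (‖y‖^3)⁻¹) • h‖ ≤ 27/m^4 * ‖x - y‖ * ‖h‖ := by
    rw [norm_smul, Real.norm_eq_abs]
    calc |(‖x‖^3)⁻¹ - (‖y‖^3)⁻¹| * ‖h‖ ≤ (27/m^4 * ‖x - y‖) * ‖h‖ := by
          apply mul_le_mul_of_nonneg_right _ (norm_nonneg h)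
          exact (inv_cube_diff hm hx hy hx' hy').trans
            (mul_le_mul_of_nonneg_left hds (by positivity))
      _ = 27/m^4 * ‖x - y‖ * ‖h‖ := by ring
  have n2 : ‖(-3*((‖x‖^5)⁻¹ - (‖y‖^5)⁻¹) * ⟪x,h⟫) • x‖ ≤ 10935/m^4 * ‖x - y‖ * ‖h‖ := by
    rw [norm_smul, Real.norm_eq_abs, abs_mul, abs_mul, abs_neg, abs_of_pos (by norm_num : (0:ℝ) < 3)]
    have hd5 : |(‖x‖^5)⁻¹ - (‖y‖^5)⁻¹| ≤ 405/m^6 * ‖x - y‖ :=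
      (inv_fifth_diff hm hx hy hx' hy').trans
        (mul_le_mul_of_nonneg_left hds (by positivity))
    calc 3 * |(‖x‖^5)⁻¹ - (‖y‖^5)⁻¹| * |⟪x,h⟫| * ‖x‖
        ≤ 3 * (405/m^6 * ‖x - y‖) * ((3*m) * ‖h‖) * (3*m) := by
          gcongr
          · exact hipx.trans (mul_le_mul_of_nonneg_right hx' (norm_nonneg h))
      _ = 10935/m^4 * ‖x - y‖ * ‖h‖ := by field_simp; ring
  have n3 : ‖(-3*(‖y‖^5)⁻¹ * (⟪x,h⟫ - ⟪y,h⟫)) • x‖ ≤ 9/m^4 * ‖x - y‖ * ‖h‖ := by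
    rw [norm_smul, Real.norm_eq_abs, abs_mul, abs_mul, abs_neg,
      abs_of_pos (by norm_num : (0:ℝ) < 3), abs_of_pos (inv_pos.mpr (pow_pos (hm.trans_le hy) 5))]
    calc 3 * (‖y‖^5)⁻¹ * |⟪x,h⟫ - ⟪y,h⟫| * ‖x‖
        ≤ 3 * (m^5)⁻¹ * (‖x - y‖ * ‖h‖) * (3*m) := by gcongr
      _ = 9/m^4 * ‖x - y‖ * ‖h‖ := by field_simp; ring
  have n4 : ‖(-3*(‖y‖^5)⁻¹ * ⟪y,h⟫) • (x - y)‖ ≤ 9/m^4 * ‖x - y‖ * ‖h‖ := by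
    rw [norm_smul, Real.norm_eq_abs, abs_mul, abs_mul, abs_neg,
      abs_of_pos (by norm_num : (0:ℝ) < 3), abs_of_pos (inv_pos.mpr (pow_pos (hm.trans_le hy) 5))]
    calc 3 * (‖y‖^5)⁻¹ * |⟪y,h⟫| * ‖x - y‖
        ≤ 3 * (m^5)⁻¹ * ((3*m) * ‖h‖) * ‖x - y‖ := by
          gcongr
          exact hipy.trans (mul_le_mul_of_nonneg_right hy' (norm_nonneg h))
      _ = 9/m^4 * ‖x - y‖ * ‖h‖ := by field_simp; ring
  refine le_trans (norm_add_le _ _) ?_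
  refine le_trans (add_le_add n1 (le_trans (norm_add_le _ _)
    (add_le_add n2 (le_trans (norm_add_le _ _) (add_le_add n3 n4))))) ?_
  exact le_of_eq (by ring)

lemma hasFDerivAt_Fv {x : E} (hx : x ≠ 0) : HasFDerivAt Fv (Lv x) x := by
  have h2 := (hasFDerivAt_inv_cube_norm hx).smul (hasFDerivAt_id x)
  exact h2

lemma taylor_bound {q : E} (w : E) (h2 : 2 ≤ ‖q‖) (hw : ‖w‖ ≤ 1) :
    ‖Fv (q - w) - Fv q + Lv q w‖ ≤ 175680 / ‖q‖ ^ 4 * ‖w‖ ^ 2 := by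
  set m : ℝ := ‖q‖ / 2 with hm_def
  have hm : (0:ℝ) < m := by simp only [hm_def]; linarith
  have hm1 : (1:ℝ) ≤ m := by simp only [hm_def]; linarith
  set s : Set (EuclideanSpace ℝ (Fin 2)) := segment ℝ q (q - w) with hs_def
  have hmem : ∀ x ∈ s, ‖x - q‖ ≤ ‖w‖ := by
    intro x hx
    obtain ⟨a, b, ha, hb, hab, rfl⟩ := hx
    have : a • q + b • (q - w) - q = -(b • w) := by
      rw [show (a:ℝ) = 1 - b by linarith]; module
    rw [this, norm_neg, norm_smul, Real.norm_eq_abs, abs_of_nonneg hb]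
    nlinarith [norm_nonneg w]
  have hnorm : ∀ x ∈ s, m ≤ ‖x‖ ∧ ‖x‖ ≤ 3 * m := by
    intro x hx
    have h1 := hmem x hx
    have h3 : ‖x - q‖ ≤ 1 := h1.trans hw
    have h4 : |‖x‖ - ‖q‖| ≤ 1 := (abs_norm_sub_norm_le x q).trans h3
    rw [abs_le] at h4
    constructor
    · simp only [hm_def]; linarith
    · simp only [hm_def]; linarith
  have hne : ∀ x ∈ s, x ≠ (0 : EuclideanSpace ℝ (Fin 2)) := by
    intro x hx h0
    have := (hnorm x hx).1
    rw [h0, norm_zero] at this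
    linarith
  -- MVT for G := Fv - Lv q
  have hG : ∀ x ∈ s, HasFDerivWithinAt (fun z => Fv z - Lv q z) (Lv x - Lv q) s x := by
    intro x hx
    exact ((hasFDerivAt_Fv (hne x hx)).sub ((Lv q).hasFDerivAt)).hasFDerivWithinAt
  have hq_mem : q ∈ s := left_mem_segment ℝ q (q - w)
  have hqw_mem : q - w ∈ s := right_mem_segment ℝ q (q - w)
  have hbound : ∀ x ∈ s, ‖Lv x - Lv q‖ ≤ 10980 / m ^ 4 * ‖w‖ := by
    intro x hx
    have := Lv_lip (x := x) (y := q) hm (hnorm x hx).1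
      (by simp only [hm_def]; linarith) (hnorm x hx).2 (by simp only [hm_def]; linarith)
    exact this.trans (mul_le_mul_of_nonneg_left (hmem x hx) (by positivity))
  have hmvt := Convex.norm_image_sub_le_of_norm_hasFDerivWithin_le hG hbound
    (convex_segment q (q - w)) hq_mem hqw_mem
  have he1 : q - w - q = -w := by abel
  have he2 : (fun z => Fv z - Lv q z) (q - w) - (fun z => Fv z - Lv q z) q
      = Fv (q - w) - Fv q + Lv q w := by
    simp only [map_sub]
    abel
  rw [he1, he2, norm_neg] at hmvt
  refine hmvt.trans ?_
  have hq0 : (0:ℝ) < ‖q‖ := by linarith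
  have : 10980 / m ^ 4 = 175680 / ‖q‖ ^ 4 := by
    simp only [hm_def]
    field_simp
    ring
  rw [this, pow_two, ← mul_assoc]

lemma hasFDerivAt_inv_norm_sub (c : E) {x : E} (h : x - c ≠ 0) :
    HasFDerivAt (fun p : E => ‖p - c‖⁻¹) (-((‖x - c‖^3)⁻¹ • innerSL ℝ (x - c))) x := by
  have ht : HasFDerivAt (fun p : E => p - c)
      (ContinuousLinearMap.id ℝ (EuclideanSpace ℝ (Fin 2))) x :=
    (hasFDerivAt_id x).sub_const c
  have hc := (hasFDerivAt_inv_norm h).comp x ht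
  simpa [Function.comp_def] using hc

set_option maxHeartbeats 2000000 in
/-- **Gradient decay of the perturbing potential.**
With the primaries of masses `μ` and `1−μ` at `(1−μ)u` and `−μu` (`u = (1,0)`,
center of mass at the origin), the gradient of
`f_μ(q) = 1/|q| − μ/|q − (1−μ)u| − (1−μ)/|q + μu|` satisfies the uniform bound
`|∇f_μ(q)| ≤ Cμ/|q|⁴` for `|q| ≥ 2`, for an absolute constant `C`. -/
theorem gradient_perturbing_potential_decay
    (u : EuclideanSpace ℝ (Fin 2)) (hu : u = EuclideanSpace.single (0 : Fin 2) (1 : ℝ)) :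
    ∃ C : ℝ, 0 < C ∧
      ∀ μ : ℝ, 0 < μ → μ < 1 →
        ∀ q : EuclideanSpace ℝ (Fin 2), 2 ≤ ‖q‖ →
          ‖gradient (fun p : EuclideanSpace ℝ (Fin 2) =>
              1 / ‖p‖ - μ / ‖p - (1 - μ) • u‖ - (1 - μ) / ‖p + μ • u‖) q‖
            ≤ C * μ / ‖q‖ ^ 4 := by
  refine ⟨175680, by norm_num, fun μ hμ0 hμ1 q hq => ?_⟩
  have hu1 : ‖u‖ = 1 := by rw [hu, EuclideanSpace.norm_single]; norm_num
  set a : EuclideanSpace ℝ (Fin 2) := (1 - μ) • u with ha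
  set b : EuclideanSpace ℝ (Fin 2) := μ • u with hb
  have hna : ‖a‖ = 1 - μ := by
    rw [ha, norm_smul, Real.norm_eq_abs, hu1, mul_one, abs_of_pos (by linarith)]
  have hnb : ‖b‖ = μ := by
    rw [hb, norm_smul, Real.norm_eq_abs, hu1, mul_one, abs_of_pos hμ0]
  have hq0 : q ≠ 0 := by intro h; rw [h, norm_zero] at hq; linarith
  have hqa : q - a ≠ 0 := by
    intro h
    have := norm_sub_norm_le q a
    rw [h, norm_zero, hna] at this
    linarith
  have hqb : q + b ≠ 0 := by
    intro h
    have := norm_sub_norm_le q (-b)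
    rw [sub_neg_eq_add, h, norm_zero, norm_neg, hnb] at this
    linarith
  -- derivatives
  have h0 := hasFDerivAt_inv_norm (x := q) hq0
  have h1 := hasFDerivAt_inv_norm_sub a hqa
  have h2' : HasFDerivAt (fun p : E => ‖p + b‖⁻¹)
      (-((‖q + b‖^3)⁻¹ • innerSL ℝ (q + b))) q := by
    have := hasFDerivAt_inv_norm_sub (-b) (x := q) (by rwa [sub_neg_eq_add])
    simpa [sub_neg_eq_add] using this
  have hf := (h0.sub (h1.const_mul μ)).sub (h2'.const_mul (1 - μ))
  set v : EuclideanSpace ℝ (Fin 2) :=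
    -Fv q + μ • Fv (q - a) + (1 - μ) • Fv (q + b) with hv_def
  have hΦ : -((‖q‖^3)⁻¹ • innerSL ℝ q) - μ • (-((‖q - a‖^3)⁻¹ • innerSL ℝ (q - a)))
      - (1 - μ) • (-((‖q + b‖^3)⁻¹ • innerSL ℝ (q + b)))
      = (InnerProductSpace.toDual ℝ (EuclideanSpace ℝ (Fin 2))) v := by
    ext h
    simp [hv_def, Fv, inner_add_left, inner_smul_left, inner_neg_left,
      real_inner_smul_left, InnerProductSpace.toDual_apply_apply]
    ring
  have hfun : (fun p : EuclideanSpace ℝ (Fin 2) =>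
        1 / ‖p‖ - μ / ‖p - a‖ - (1 - μ) / ‖p + b‖)
      = (fun p : EuclideanSpace ℝ (Fin 2) =>
        ‖p‖⁻¹ - μ * ‖p - a‖⁻¹ - (1 - μ) * ‖p + b‖⁻¹) := by
    funext p
    rw [one_div, div_eq_mul_inv, div_eq_mul_inv]
  have hgrad : HasGradientAt (fun p : EuclideanSpace ℝ (Fin 2) =>
      1 / ‖p‖ - μ / ‖p - a‖ - (1 - μ) / ‖p + b‖) v q := by
    rw [hfun]
    exact hasGradientAt_iff_hasFDerivAt.mpr (hΦ ▸ hf)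
  rw [hgrad.gradient]
  -- the vector identity
  have hz : μ • (Lv q a) = (1 - μ) • (Lv q b) := by
    rw [← map_smul, ← map_smul]
    congr 1
    rw [ha, hb, smul_smul, smul_smul, mul_comm]
  have hv : v = μ • (Fv (q - a) - Fv q + Lv q a)
      + (1 - μ) • (Fv (q + b) - Fv q + Lv q (-b)) := by
    rw [map_neg]
    have expand : μ • (Fv (q - a) - Fv q + Lv q a)
        + (1 - μ) • (Fv (q + b) - Fv q + -(Lv q b))
        = μ • Fv (q - a) + (1 - μ) • Fv (q + b) - Fv q
          + (μ • Lv q a - (1 - μ) • Lv q b) := by module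
    rw [expand, hz, sub_self, add_zero, hv_def]
    module
  -- bounds
  have tb1 : ‖Fv (q - a) - Fv q + Lv q a‖ ≤ 175680 / ‖q‖ ^ 4 * (1 - μ) ^ 2 := by
    have := taylor_bound a hq (by rw [hna]; linarith)
    rwa [hna] at this
  have tb2 : ‖Fv (q + b) - Fv q + Lv q (-b)‖ ≤ 175680 / ‖q‖ ^ 4 * μ ^ 2 := by
    have := taylor_bound (-b) hq (by rw [norm_neg, hnb]; linarith)
    rwa [sub_neg_eq_add, norm_neg, hnb] at this
  have hKpos : (0:ℝ) ≤ 175680 / ‖q‖ ^ 4 := by positivity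
  have hvb : ‖v‖ ≤ μ * (175680 / ‖q‖ ^ 4 * (1 - μ) ^ 2)
      + (1 - μ) * (175680 / ‖q‖ ^ 4 * μ ^ 2) := by
    rw [hv]
    refine (norm_add_le _ _).trans ?_
    rw [norm_smul, norm_smul, Real.norm_eq_abs, Real.norm_eq_abs,
      abs_of_pos hμ0, abs_of_pos (by linarith : (0:ℝ) < 1 - μ)]
    exact add_le_add (mul_le_mul_of_nonneg_left tb1 hμ0.le)
      (mul_le_mul_of_nonneg_left tb2 (by linarith))
  refine hvb.trans ?_
  have heq : (175680:ℝ) * μ / ‖q‖ ^ 4 = 175680 / ‖q‖ ^ 4 * μ := by ring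
  rw [heq]
  nlinarith [hKpos, hμ0, hμ1, mul_nonneg hKpos (mul_pos hμ0 (by linarith : (0:ℝ) < 1 - μ)).le]
end

section
/- Let L > 0 and ℓ ∈ ℝ, define e : (0, L) → (0, 1) by e(G) = √(1 − G²/L²), and suppose u : (0, L) → ℝ is differentiable and satisfies the Kepler equation u(G) − e(G)·sin u(G) = ℓ for all G ∈ (0, L). Then the function G ↦ L⁴(1 − e(G)·cos u(G))² is differentiable on (0, L) with derivative equal to 2L⁴·(e(G) − cos u(G))·e′(G), where e′(G) = −G/(L²·e(G)). -/
open Real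

/-- **Derivative of the squared radius with respect to the angular momentum.**
In Delaunay coordinates, let `e(G) = √(1 − G²/L²)` and let the eccentric anomaly
`u(G)` solve the Kepler equation `u − e sin u = ℓ`.  Then
`G ↦ L⁴(1 − e(G) cos u(G))²` (the squared radius `|q|²`) is differentiable on
`(0, L)` with derivative `2L⁴(e(G) − cos u(G))·e′(G)`, where `e′(G) = −G/(L²e(G))`. -/
theorem deriv_squared_radius_delaunay (L : ℝ) (hL : 0 < L) (ℓ : ℝ)
    (u : ℝ → ℝ)
    (hu : ∀ G ∈ Set.Ioo (0 : ℝ) L, DifferentiableAt ℝ u G)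
    (hkepler : ∀ G ∈ Set.Ioo (0 : ℝ) L,
      u G - Real.sqrt (1 - G ^ 2 / L ^ 2) * Real.sin (u G) = ℓ) :
    ∀ G ∈ Set.Ioo (0 : ℝ) L,
      HasDerivAt
        (fun G' : ℝ => L ^ 4 * (1 - Real.sqrt (1 - G' ^ 2 / L ^ 2) * Real.cos (u G')) ^ 2)
        (2 * L ^ 4 * (Real.sqrt (1 - G ^ 2 / L ^ 2) - Real.cos (u G)) *
          (-G / (L ^ 2 * Real.sqrt (1 - G ^ 2 / L ^ 2)))) G := by
  intro G hG
  obtain ⟨hG0, hGL⟩ := hG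
  set E : ℝ := Real.sqrt (1 - G ^ 2 / L ^ 2) with hEdef
  set c : ℝ := Real.cos (u G) with hcdef
  set s : ℝ := Real.sin (u G) with hsdef
  have hL2 : (0:ℝ) < L ^ 2 := by positivity
  have h1 : (0:ℝ) < 1 - G ^ 2 / L ^ 2 := by
    have : G ^ 2 < L ^ 2 := by nlinarith
    rw [sub_pos, div_lt_one hL2]; exact this
  have hE : 0 < E := Real.sqrt_pos.mpr h1
  have hE1 : E < 1 := by
    rw [hEdef]
    rw [show (1 - G ^ 2 / L ^ 2) = 1 - G ^ 2 / L ^ 2 from rfl]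
    have hlt : 1 - G ^ 2 / L ^ 2 < 1 := by
      have : 0 < G ^ 2 / L ^ 2 := by positivity
      linarith
    calc Real.sqrt (1 - G ^ 2 / L ^ 2) < Real.sqrt 1 := Real.sqrt_lt_sqrt h1.le hlt
      _ = 1 := Real.sqrt_one
  have hden : 0 < 1 - E * c := by
    have h2 : E * c ≤ E * |c| := by
      apply mul_le_mul_of_nonneg_left (le_abs_self c) hE.le
    have h3 : |c| ≤ 1 := abs_cos_le_one _
    nlinarith
  set eP : ℝ := -G / (L ^ 2 * E) with hePdef
  -- derivative of E
  have hinner : HasDerivAt (fun G' : ℝ => 1 - G' ^ 2 / L ^ 2) (-(2 * G) / L ^ 2) G := by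
    have h := ((hasDerivAt_pow 2 G).div_const (L ^ 2)).const_sub 1
    exact h.congr_deriv (by norm_num [neg_div])
  have hEderiv : HasDerivAt (fun G' : ℝ => Real.sqrt (1 - G' ^ 2 / L ^ 2)) eP G := by
    have h := hinner.sqrt (ne_of_gt h1)
    convert h using 1
    rw [hePdef, ← hEdef]
    field_simp
  -- derivative of u
  have hu' : HasDerivAt u (deriv u G) G := (hu G ⟨hG0, hGL⟩).hasDerivAt
  set du : ℝ := deriv u G with hdudef
  have hsin : HasDerivAt (fun G' : ℝ => Real.sin (u G')) (c * du) G :=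
    (Real.hasDerivAt_sin (u G)).comp G hu'
  have hcos : HasDerivAt (fun G' : ℝ => Real.cos (u G')) (-s * du) G :=
    (Real.hasDerivAt_cos (u G)).comp G hu'
  -- Kepler relation gives the derivative of u
  have hkep0 : HasDerivAt
      (fun G' : ℝ => u G' - Real.sqrt (1 - G' ^ 2 / L ^ 2) * Real.sin (u G')) 0 G := by
    have hmem : Set.Ioo (0:ℝ) L ∈ nhds G := (isOpen_Ioo).mem_nhds ⟨hG0, hGL⟩
    have heq : (fun G' : ℝ => u G' - Real.sqrt (1 - G' ^ 2 / L ^ 2) * Real.sin (u G'))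
        =ᶠ[nhds G] fun _ => ℓ := by
      filter_upwards [hmem] with x hx using hkepler x hx
    exact (hasDerivAt_const G ℓ).congr_of_eventuallyEq heq
  have hkep1 : HasDerivAt
      (fun G' : ℝ => u G' - Real.sqrt (1 - G' ^ 2 / L ^ 2) * Real.sin (u G'))
      (du - (eP * s + E * (c * du))) G := hu'.sub (hEderiv.mul hsin)
  have hrel : du - (eP * s + E * (c * du)) = 0 := hkep1.unique hkep0
  -- main computation
  have hmain : HasDerivAt
      (fun G' : ℝ => L ^ 4 * (1 - Real.sqrt (1 - G' ^ 2 / L ^ 2) * Real.cos (u G')) ^ 2)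
      (L ^ 4 * (2 * (1 - E * c) ^ 1 * (-(eP * c + E * (-s * du))))) G := by
    exact (((hEderiv.mul hcos).const_sub 1).pow 2).const_mul (L ^ 4)
  convert hmain using 1
  have hsc : s ^ 2 + c ^ 2 = 1 := Real.sin_sq_add_cos_sq (u G)
  have hrel2 : (1 - E * c) * du = eP * s := by linear_combination hrel
  linear_combination (-2*L^4*E*s) * hrel2 + (-2*L^4*eP*E) * hsc
end

section
/- For every real number e with |e| < 1, ∫₀^{2π} (e − cos u)·(1 − e·cos u)^{−4} du = −2πe·(1 − e²)^{−5/2}. Consequently this integral, as a function of e, is real-analytic on (−1, 1) and vanishes only at e = 0. -/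
open Real intervalIntegral

set_option maxHeartbeats 1000000

lemma ratpart {e : ℝ} (he : 1 - e ^ 2 ≠ 0)
    (hD : ∀ u : ℝ, 0 < 1 - e * Real.cos u) (u : ℝ) :
    HasDerivAt (fun u : ℝ => Real.sin u * ((-1/3) / (1 - e * Real.cos u) ^ 3
        + (-1/(3*(1 - e^2))) / (1 - e * Real.cos u) ^ 2
        + (-(1+2*e^2)/(3*(1 - e^2)^2)) / (1 - e * Real.cos u)))
      ((e - Real.cos u) / (1 - e * Real.cos u) ^ 4
        + (e/(1 - e^2)^2) / (1 - e * Real.cos u)) u := by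
  have hDne : (1 - e * Real.cos u) ≠ 0 := (hD u).ne'
  have hd : HasDerivAt (fun u : ℝ => 1 - e * Real.cos u) (e * Real.sin u) u := by
    have := ((Real.hasDerivAt_cos u).const_mul e).const_sub 1
    simpa using this
  have h3 : HasDerivAt (fun u : ℝ => (-1/3 : ℝ) / (1 - e * Real.cos u) ^ 3)
      ((e * Real.sin u) / (1 - e * Real.cos u) ^ 4) u := by
    have := (hasDerivAt_const u ((-1:ℝ)/3)).div (hd.pow 3) (pow_ne_zero _ hDne)
    refine this.congr_deriv (Eq.symm ?_)
    simp only [Pi.pow_apply]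
    field_simp
    ring
  have h2 : HasDerivAt (fun u : ℝ => (-1/(3*(1 - e^2)) : ℝ) / (1 - e * Real.cos u) ^ 2)
      ((2/(3*(1 - e^2))) * (e * Real.sin u) / (1 - e * Real.cos u) ^ 3) u := by
    have := (hasDerivAt_const u ((-1:ℝ)/(3*(1 - e^2)))).div (hd.pow 2) (pow_ne_zero _ hDne)
    refine this.congr_deriv (Eq.symm ?_)
    simp only [Pi.pow_apply]
    field_simp
    ring
  have h1 : HasDerivAt (fun u : ℝ => (-(1+2*e^2)/(3*(1 - e^2)^2) : ℝ) / (1 - e * Real.cos u))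
      (((1+2*e^2)/(3*(1 - e^2)^2)) * (e * Real.sin u) / (1 - e * Real.cos u) ^ 2) u := by
    have := (hasDerivAt_const u (-(1+2*e^2)/(3*(1 - e^2)^2))).div hd hDne
    refine this.congr_deriv (Eq.symm ?_)
    field_simp
    ring
  have hm := (Real.hasDerivAt_sin u).mul ((h3.add h2).add h1)
  refine hm.congr_deriv (Eq.symm ?_)
  simp only [Pi.add_apply]
  have hs : Real.sin u ^ 2 = 1 - Real.cos u ^ 2 := Real.sin_sq u
  set s := Real.sin u
  set c := Real.cos u
  have key : s * (e * s / (1 - e * c) ^ 4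
        + 2 / (3 * (1 - e ^ 2)) * (e * s) / (1 - e * c) ^ 3
        + (1 + 2 * e ^ 2) / (3 * (1 - e ^ 2) ^ 2) * (e * s) / (1 - e * c) ^ 2)
      = (1 - c ^ 2) * (e / (1 - e * c) ^ 4
        + 2 * e / (3 * (1 - e ^ 2) * (1 - e * c) ^ 3)
        + (1 + 2 * e ^ 2) * e / (3 * (1 - e ^ 2) ^ 2 * (1 - e * c) ^ 2)) := by
    rw [← hs]
    field_simp
  rw [key]
  field_simp
  ring

lemma arcpart {e σ : ℝ} (hσ : σ ^ 2 = 1 - e ^ 2) (hσ0 : 0 < σ)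
    (hD : ∀ u : ℝ, 0 < 1 - e * Real.cos u) (u : ℝ) :
    HasDerivAt (fun u : ℝ => u + 2 * Real.arctan (e * Real.sin u / (1 + σ - e * Real.cos u)))
      (σ / (1 - e * Real.cos u)) u := by
  have hΔpos : 0 < 1 + σ - e * Real.cos u := by have := hD u; linarith
  have hΔne : 1 + σ - e * Real.cos u ≠ 0 := hΔpos.ne'
  have hd : HasDerivAt (fun u : ℝ => 1 + σ - e * Real.cos u) (e * Real.sin u) u := by
    have := ((Real.hasDerivAt_cos u).const_mul e).const_sub (1 + σ)
    simpa using this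
  have hnum : HasDerivAt (fun u : ℝ => e * Real.sin u) (e * Real.cos u) u :=
    (Real.hasDerivAt_sin u).const_mul e
  have hr := hnum.div hd hΔne
  have harc := (Real.hasDerivAt_arctan
      (e * Real.sin u / (1 + σ - e * Real.cos u))).comp u hr
  have htot := (hasDerivAt_id u).add (harc.const_mul 2)
  refine htot.congr_deriv (Eq.symm ?_)
  have hs : Real.sin u ^ 2 = 1 - Real.cos u ^ 2 := Real.sin_sq u
  set s := Real.sin u
  set c := Real.cos u
  have hone : 1 + (e * s / (1 + σ - e * c)) ^ 2
      = (2 * (1 + σ) * (1 - e * c)) / (1 + σ - e * c) ^ 2 := by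
    field_simp
    linear_combination (e ^ 2) * hs + hσ
  rw [hone]
  have h1 : (1:ℝ) + σ ≠ 0 := by positivity
  have hDne : (1:ℝ) - e * c ≠ 0 := (hD u).ne'
  field_simp
  linear_combination hσ + e ^ 2 * hs

lemma denom_pos {e : ℝ} (he : |e| < 1) (u : ℝ) : 0 < 1 - e * Real.cos u := by
  have h1 : |e * Real.cos u| < 1 := by
    calc |e * Real.cos u| = |e| * |Real.cos u| := abs_mul _ _
      _ ≤ |e| * 1 := by
          have := Real.abs_cos_le_one u
          nlinarith [abs_nonneg e]
      _ < 1 := by linarith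
  have := (abs_lt.mp h1).2
  linarith

lemma key_integral {e : ℝ} (he : |e| < 1) :
    (∫ u in (0:ℝ)..(2*π), (e - Real.cos u) / (1 - e * Real.cos u) ^ 4)
      = -2 * π * e * (1 - e ^ 2) ^ (-(5:ℝ)/2) := by
  have he2 : (0:ℝ) < 1 - e ^ 2 := by nlinarith [abs_lt.mp he]
  have hene : (1:ℝ) - e ^ 2 ≠ 0 := he2.ne'
  set σ := Real.sqrt (1 - e ^ 2) with hσdef
  have hσ : σ ^ 2 = 1 - e ^ 2 := Real.sq_sqrt he2.le
  have hσ0 : 0 < σ := Real.sqrt_pos.mpr he2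
  have hD := fun u => denom_pos he u
  -- antiderivative
  set H : ℝ → ℝ := fun u => Real.sin u * ((-1/3) / (1 - e * Real.cos u) ^ 3
        + (-1/(3*(1 - e^2))) / (1 - e * Real.cos u) ^ 2
        + (-(1+2*e^2)/(3*(1 - e^2)^2)) / (1 - e * Real.cos u))
      - (e/(1 - e^2)^2) / σ * (u + 2 * Real.arctan (e * Real.sin u / (1 + σ - e * Real.cos u)))
    with hHdef
  have hderiv : ∀ u ∈ Set.uIcc (0:ℝ) (2*π),
      HasDerivAt H ((e - Real.cos u) / (1 - e * Real.cos u) ^ 4) u := by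
    intro u _
    have h1 := ratpart hene hD u
    have h2 := ((arcpart hσ hσ0 hD u).const_mul (e/(1 - e^2)^2 / σ))
    have h := h1.sub h2
    refine h.congr_deriv (Eq.symm ?_)
    have hDne := (hD u).ne'
    field_simp
    ring
  have hint : IntervalIntegrable (fun u => (e - Real.cos u) / (1 - e * Real.cos u) ^ 4)
      MeasureTheory.volume 0 (2*π) := by
    apply Continuous.intervalIntegrable
    apply Continuous.div (by fun_prop) (by fun_prop)
    intro x
    exact pow_ne_zero _ (hD x).ne'
  rw [intervalIntegral.integral_eq_sub_of_hasDerivAt hderiv hint]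
  have h2π : Real.sin (2*π) = 0 := by simp [Real.sin_two_pi]
  have hc2π : Real.cos (2*π) = 1 := by simp [Real.cos_two_pi]
  have hrpow : (1 - e ^ 2) ^ (-(5:ℝ)/2) = ((1 - e^2)^2 * σ)⁻¹ := by
    rw [hσdef, show (-(5:ℝ)/2) = -(2 + 1/2) by norm_num, Real.rpow_neg he2.le,
      Real.rpow_add he2, ← Real.sqrt_eq_rpow,
      show ((1:ℝ)-e^2)^(2:ℝ) = (1-e^2)^(2:ℕ) from by
        rw [← Real.rpow_natCast (1-e^2) 2]; norm_num]
  rw [hHdef]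
  simp only [h2π, hc2π, Real.sin_zero, Real.cos_zero]
  rw [hrpow]
  have hσne := hσ0.ne'
  field_simp
  ring

lemma closed_analytic :
    AnalyticOnNhd ℝ (fun e : ℝ => -2 * π * e * (1 - e ^ 2) ^ (-(5:ℝ)/2))
      (Set.Ioo (-1:ℝ) 1) := by
  have hF : ∀ x ∈ Set.Ioo (-1:ℝ) 1,
      AnalyticAt ℝ (fun e : ℝ =>
        (((-2 * (π:ℂ)) * (e:ℂ) * (1 - (e:ℂ) ^ 2) ^ ((-(5:ℂ))/2)).re)) x := by
    intro x hx
    have he2 : (0:ℝ) < 1 - x ^ 2 := by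
      obtain ⟨h1, h2⟩ := hx; nlinarith
    have hm : (1 - (x:ℂ) ^ 2) ∈ Complex.slitPlane := by
      rw [Complex.mem_slitPlane_iff]
      left
      simp only [Complex.sub_re, Complex.one_re, Complex.sq_norm]
      simp [← Complex.ofReal_pow, he2]
    have hC : AnalyticAt ℂ (fun z : ℂ => (-2 * (π:ℂ)) * z * (1 - z ^ 2) ^ ((-(5:ℂ))/2)) (x:ℂ) := by
      apply AnalyticAt.mul
      · exact analyticAt_const.mul analyticAt_id
      · exact AnalyticAt.cpow (analyticAt_const.sub (analyticAt_id.pow 2)) analyticAt_const hm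
    have hR : AnalyticAt ℝ (fun z : ℂ => (-2 * (π:ℂ)) * z * (1 - z ^ 2) ^ ((-(5:ℂ))/2)) (x:ℂ) :=
      hC.restrictScalars
    have comp1 : AnalyticAt ℝ (fun e : ℝ =>
        ((-2 * (π:ℂ)) * (e:ℂ) * (1 - (e:ℂ) ^ 2) ^ ((-(5:ℂ))/2))) x :=
      hR.comp (Complex.ofRealCLM.analyticAt x)
    exact (Complex.reCLM.analyticAt _).comp comp1
  apply AnalyticOnNhd.congr isOpen_Ioo hF
  intro e he
  have he2 : (0:ℝ) < 1 - e ^ 2 := by obtain ⟨h1, h2⟩ := he; nlinarith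
  have hcast : ((1 - e ^ 2 : ℝ):ℂ) ^ ((-(5:ℂ))/2)
      = (((1 - e ^ 2) ^ (-(5:ℝ)/2) : ℝ) : ℂ) := by
    rw [Complex.ofReal_cpow he2.le]
    norm_num
  simp only
  rw [show ((1:ℂ) - (e:ℂ) ^ 2) = ((1 - e ^ 2 : ℝ):ℂ) by push_cast; ring, hcast]
  rw [show (-2 * (π:ℂ)) * (e:ℂ) * (((1 - e ^ 2) ^ (-(5:ℝ)/2) : ℝ) : ℂ)
      = (((-2 * π * e * (1 - e ^ 2) ^ (-(5:ℝ)/2) : ℝ)) : ℂ) by push_cast; ring]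
  simp

/-- **The averaged quadrupole integral.**
For `|e| < 1`, `∫₀^{2π} (e − cos u)(1 − e cos u)^{−4} du = −2πe(1 − e²)^{−5/2}`;
consequently, as a function of `e`, the integral is real-analytic on `(−1, 1)`
and vanishes only at `e = 0`. -/
theorem averaged_quadrupole_integral :
    (∀ e : ℝ, |e| < 1 →
      (∫ u in (0 : ℝ)..(2 * π), (e - Real.cos u) / (1 - e * Real.cos u) ^ 4)
        = -2 * π * e * (1 - e ^ 2) ^ (-(5 : ℝ) / 2)) ∧
    AnalyticOnNhd ℝ
      (fun e : ℝ => ∫ u in (0 : ℝ)..(2 * π), (e - Real.cos u) / (1 - e * Real.cos u) ^ 4)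
      (Set.Ioo (-1 : ℝ) 1) ∧
    ∀ e ∈ Set.Ioo (-1 : ℝ) 1,
      ((∫ u in (0 : ℝ)..(2 * π), (e - Real.cos u) / (1 - e * Real.cos u) ^ 4) = 0 ↔ e = 0) := by
  have habs : ∀ e ∈ Set.Ioo (-1:ℝ) 1, |e| < 1 := by
    intro e he; exact abs_lt.mpr ⟨he.1, he.2⟩
  refine ⟨fun e he => key_integral he, ?_, ?_⟩
  · apply AnalyticOnNhd.congr isOpen_Ioo closed_analytic
    intro e he
    exact (key_integral (habs e he)).symm
  · intro e he
    rw [key_integral (habs e he)]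
    have he2 : (0:ℝ) < 1 - e ^ 2 := by obtain ⟨h1, h2⟩ := he; nlinarith
    have hp : 0 < (1 - e ^ 2) ^ (-(5:ℝ)/2) := Real.rpow_pos_of_pos he2 _
    constructor
    · intro h
      by_contra he0
      exact (mul_ne_zero (mul_ne_zero (mul_ne_zero (by norm_num : (-2:ℝ) ≠ 0)
        Real.pi_ne_zero) he0) hp.ne') h
    · intro h; simp [h]
end
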